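/- arXiv:2509.17101 — 2 statements merged into one kernel-verified Lean document; each statement's English description precedes it below -/
import Mathlib

section
/- Let W be a d×d positive definite Hermitian complex matrix and E a d×d positive definite Hermitian complex matrix. The function W ↦ Re(trace(W·E)) − Real.log (det W).re, restricted to positive definite Hermitian W, is uniquely minimized at W = E⁻¹, with minimum value d + Real.log (det E).re. -/
open Matrix
open scoped ComplexOrder

-- trace = sum of eigenvalues
lemma my_trace_eq_sum {d : ℕ} {A : Matrix (Fin d) (Fin d) ℂ} (hA : A.IsHermitian) :
    A.trace = ∑ i, (hA.eigenvalues i : ℂ) := by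
  conv_lhs => rw [hA.spectral_theorem]
  rw [Unitary.conjStarAlgAut_apply, Matrix.trace_mul_cycle, Matrix.mem_unitaryGroup_iff'.mp (hA.eigenvectorUnitary).2,
    one_mul, Matrix.trace_diagonal]
  rfl

-- posdef det is a positive real
lemma my_det_real {d : ℕ} {A : Matrix (Fin d) (Fin d) ℂ} (hA : A.PosDef) :
    A.det = (A.det.re : ℂ) ∧ 0 < A.det.re := by
  have h := hA.det_pos
  rw [Complex.lt_def] at h
  exact ⟨Complex.ext rfl (by simpa using h.2.symm), by simpa using h.1⟩

-- key scalar inequality for positive definite S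
lemma my_key {d : ℕ} {S : Matrix (Fin d) (Fin d) ℂ} (hS : S.PosDef) :
    (d : ℝ) ≤ S.trace.re - Real.log S.det.re ∧
    (S.trace.re - Real.log S.det.re = d → S = 1) := by
  set μ := hS.1.eigenvalues with hμ
  have hμpos : ∀ i, 0 < μ i := fun i => hS.eigenvalues_pos i
  have htr : S.trace.re = ∑ i, μ i := by
    rw [my_trace_eq_sum hS.1]
    simp
    rfl
  have hdet : S.det.re = ∏ i, μ i := by
    rw [hS.1.det_eq_prod_eigenvalues, ← RCLike.ofReal_prod]
    exact Complex.ofReal_re _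
  have hlog : Real.log S.det.re = ∑ i, Real.log (μ i) := by
    rw [hdet, Real.log_prod (fun i _ => (hμpos i).ne')]
  have hterm : ∀ i, (1 : ℝ) ≤ μ i - Real.log (μ i) := fun i => by
    have := Real.log_le_sub_one_of_pos (hμpos i)
    linarith
  have hsum : S.trace.re - Real.log S.det.re = ∑ i, (μ i - Real.log (μ i)) := by
    rw [htr, hlog, Finset.sum_sub_distrib]
  constructor
  · rw [hsum]
    calc (d : ℝ) = ∑ _i : Fin d, (1 : ℝ) := by simp
    _ ≤ _ := Finset.sum_le_sum (fun i _ => hterm i)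
  · intro heq
    rw [hsum] at heq
    have hall : ∀ i ∈ Finset.univ, (1 : ℝ) = μ i - Real.log (μ i) := by
      rw [← Finset.sum_eq_sum_iff_of_le (fun i _ => hterm i)]
      simpa using heq.symm
    have hone : ∀ i, μ i = 1 := by
      intro i
      by_contra hne
      have := Real.log_lt_sub_one_of_pos (hμpos i) hne
      have h1 := hall i (Finset.mem_univ i)
      linarith
    have : S = 1 := by
      conv_lhs => rw [hS.1.spectral_theorem]
      have : Matrix.diagonal ((RCLike.ofReal : ℝ → ℂ) ∘ μ) = 1 := by
        have : (RCLike.ofReal : ℝ → ℂ) ∘ μ = fun _ => 1 := by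
          funext i; simp [hone i]
        rw [this]
        simp [Matrix.diagonal_one]
      rw [this, map_one]
    exact this

lemma my_conj_posdef {d : ℕ} {A R : Matrix (Fin d) (Fin d) ℂ} (hA : A.PosDef)
    (hR : R.IsHermitian) (hRu : IsUnit R) : (R * A * R).PosDef := by
  refine Matrix.PosDef.of_dotProduct_mulVec_pos ?_ ?_
  · show (R * A * R)ᴴ = R * A * R
    simp [Matrix.conjTranspose_mul, hR.eq, hA.1.eq, Matrix.mul_assoc]
  · intro x hx
    have hx' : R *ᵥ x ≠ 0 :=
      ((Matrix.mulVec_injective_iff_isUnit.mpr hRu).ne_iff' (by simp)).2 hx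
    have h := hA.dotProduct_mulVec_pos hx'
    have hrw : R * A * R = Rᴴ * A * R := by rw [hR.eq]
    rw [hrw]
    simpa only [star_mulVec, dotProduct_mulVec, vecMul_vecMul] using h

theorem wmmse_weight_update_optimal {d : ℕ}
    (E : Matrix (Fin d) (Fin d) ℂ) (hE : E.PosDef) :
    ((E⁻¹ * E).trace.re - Real.log (E⁻¹.det.re) = d + Real.log E.det.re) ∧
    (∀ W : Matrix (Fin d) (Fin d) ℂ, W.PosDef →
      d + Real.log E.det.re ≤ (W * E).trace.re - Real.log W.det.re) ∧
    (∀ W : Matrix (Fin d) (Fin d) ℂ, W.PosDef →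
      (W * E).trace.re - Real.log W.det.re = d + Real.log E.det.re → W = E⁻¹) := by
  classical
  obtain ⟨hEdet_eq, hEdet_pos⟩ := my_det_real hE
  have hEdet_ne : E.det ≠ 0 := hE.det_pos.ne'
  set R := (open scoped MatrixOrder in CFC.sqrt E) with hRdef
  have hRherm : R.IsHermitian := by open scoped MatrixOrder in exact (CFC.sqrt_nonneg E).isSelfAdjoint
  have hRR : R * R = E := by open scoped MatrixOrder in exact CFC.sqrt_mul_sqrt_self E hE.posSemidef.nonneg
  have hRdet : R.det * R.det = E.det := by rw [← Matrix.det_mul, hRR]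
  have hRdet_ne : R.det ≠ 0 := by
    intro h
    apply hEdet_ne
    rw [← hRdet, h, mul_zero]
  have hRu : IsUnit R := (Matrix.isUnit_iff_isUnit_det R).mpr hRdet_ne.isUnit
  -- the generic bound
  have main : ∀ W : Matrix (Fin d) (Fin d) ℂ, W.PosDef →
      ((d : ℝ) + Real.log E.det.re ≤ (W * E).trace.re - Real.log W.det.re ∧
       ((W * E).trace.re - Real.log W.det.re = d + Real.log E.det.re → W = E⁻¹)) := by
    intro W hW
    obtain ⟨hWdet_eq, hWdet_pos⟩ := my_det_real hW
    set S := R * W * R with hSdef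
    have hS : S.PosDef := my_conj_posdef hW hRherm hRu
    obtain ⟨hSdet_eq, hSdet_pos⟩ := my_det_real hS
    have htr : S.trace = (W * E).trace := by
      rw [hSdef, Matrix.trace_mul_cycle, hRR, Matrix.trace_mul_comm]
    have hdet : S.det = E.det * W.det := by
      rw [hSdef, Matrix.det_mul, Matrix.det_mul, ← hRdet]
      ring
    have hre : S.det.re = E.det.re * W.det.re := by
      have : ((S.det.re : ℂ)) = ((E.det.re * W.det.re : ℝ) : ℂ) := by
        push_cast
        rw [← hSdet_eq, ← hEdet_eq, ← hWdet_eq, hdet]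
      exact_mod_cast this
    have hlog : Real.log S.det.re = Real.log E.det.re + Real.log W.det.re := by
      rw [hre, Real.log_mul hEdet_pos.ne' hWdet_pos.ne']
    obtain ⟨hkey1, hkey2⟩ := my_key hS
    constructor
    · rw [← htr] at *
      linarith
    · intro heq
      have h1 : S.trace.re - Real.log S.det.re = d := by
        rw [htr, hlog]
        linarith
      have hS1 : S = 1 := hkey2 h1
      have hWeq : W = R⁻¹ * (R * W * R) * R⁻¹ := by
        calc W = (R⁻¹ * R) * W * (R * R⁻¹) := by
              rw [Matrix.nonsing_inv_mul _ hRdet_ne.isUnit, Matrix.mul_nonsing_inv _ hRdet_ne.isUnit,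
                one_mul, mul_one]
        _ = R⁻¹ * (R * W * R) * R⁻¹ := by noncomm_ring
      rw [hWeq, ← hSdef, hS1, mul_one, ← Matrix.mul_inv_rev, hRR]
  refine ⟨?_, fun W hW => (main W hW).1, fun W hW => (main W hW).2⟩
  rw [Matrix.nonsing_inv_mul _ hEdet_ne.isUnit, Matrix.trace_one,
    Matrix.det_nonsing_inv]
  have h1 : (Ring.inverse E.det).re = (E.det.re)⁻¹ := by
    rw [Ring.inverse_eq_inv]
    conv_lhs => rw [hEdet_eq]
    rw [← Complex.ofReal_inv, Complex.ofReal_re]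
  rw [h1, Real.log_inv]
  simp
end

section
/- For any d×d positive definite Hermitian complex matrix E, the infimum over positive definite Hermitian d×d matrices W of Re(trace(W·E)) − Real.log((det W).re) equals d + Real.log((det E).re), and hence maximizing log det(E⁻¹) is equivalent to minimizing min_W [Re(trace(W·E)) − log det W]. -/
open Matrix
open scoped ComplexOrder

/-- Conjugation of a positive definite matrix by an invertible Hermitian matrix. -/
lemma posDef_conj_aux {d : ℕ} {S W : Matrix (Fin d) (Fin d) ℂ}
    (hS : S.IsHermitian) (hSu : IsUnit S) (hW : W.PosDef) : (S * W * S).PosDef := by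
  refine Matrix.PosDef.of_dotProduct_mulVec_pos ?_ fun x hx => ?_
  · show (S * W * S)ᴴ = S * W * S
    rw [conjTranspose_mul, conjTranspose_mul, hS.eq, hW.isHermitian.eq, mul_assoc]
  · have hxS : S *ᵥ x ≠ 0 := by
      intro h
      exact hx ((Matrix.mulVec_injective_iff_isUnit.mpr hSu).eq_iff.mp
        (by simpa using h))
    have key : star x ⬝ᵥ ((S * W * S) *ᵥ x) = star (S *ᵥ x) ⬝ᵥ (W *ᵥ (S *ᵥ x)) := by
      rw [← mulVec_mulVec, ← mulVec_mulVec, dotProduct_mulVec (star x) S,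
        star_mulVec, hS.eq]
    rw [key]
    exact hW.dotProduct_mulVec_pos hxS

/-- Key inequality: for a positive definite complex matrix,
`trace - log det ≥ d`. -/
lemma trace_sub_log_det_ge {d : ℕ} {M : Matrix (Fin d) (Fin d) ℂ} (hM : M.PosDef) :
    (d : ℝ) ≤ M.trace.re - Real.log M.det.re := by
  set μ := hM.isHermitian.eigenvalues with hμ
  have hμpos : ∀ i, 0 < μ i := fun i => hM.eigenvalues_pos i
  have htrace : M.trace = ((∑ i, μ i : ℝ) : ℂ) := by
    conv_lhs => rw [hM.isHermitian.spectral_theorem]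
    rw [Unitary.conjStarAlgAut_apply, trace_mul_cycle]
    rw [show (star (hM.isHermitian.eigenvectorUnitary : Matrix (Fin d) (Fin d) ℂ)) *
        (hM.isHermitian.eigenvectorUnitary : Matrix (Fin d) (Fin d) ℂ) = 1 from
        Unitary.coe_star_mul_self _, one_mul, trace_diagonal]
    push_cast
    rfl
  have hdet : M.det = ((∏ i, μ i : ℝ) : ℂ) := by
    rw [hM.isHermitian.det_eq_prod_eigenvalues]
    push_cast
    rfl
  rw [htrace, hdet, Complex.ofReal_re, Complex.ofReal_re]
  rw [Real.log_prod (fun i _ => (hμpos i).ne'), ← Finset.sum_sub_distrib]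
  have : (d : ℝ) = ∑ _i : Fin d, (1 : ℝ) := by simp
  rw [this]
  refine Finset.sum_le_sum fun i _ => ?_
  have := Real.log_le_sub_one_of_pos (hμpos i)
  linarith

lemma pos_re_im {z : ℂ} (hz : 0 < z) : 0 < z.re ∧ z.im = 0 := by
  rw [Complex.lt_def] at hz
  exact ⟨by simpa using hz.1, by simpa using hz.2.symm⟩

theorem rate_wmmse_equivalence {d : ℕ}
    (E : Matrix (Fin d) (Fin d) ℂ) (hE : E.PosDef) :
    sInf {x : ℝ | ∃ W : Matrix (Fin d) (Fin d) ℂ, W.PosDef ∧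
        x = (W * E).trace.re - Real.log W.det.re} =
      d + Real.log E.det.re := by
  obtain ⟨hEre, hEim⟩ := pos_re_im hE.det_pos
  have hEdetU : IsUnit E.det := hE.det_pos.ne'.isUnit
  -- square root of E
  obtain ⟨S, hSherm, hSS⟩ : ∃ S : Matrix (Fin d) (Fin d) ℂ, S.IsHermitian ∧ S * S = E := by
    open scoped MatrixOrder Matrix.Norms.L2Operator in
    exact ⟨CFC.sqrt E, (CFC.sqrt_nonneg E).posSemidef.isHermitian,
      CFC.sqrt_mul_sqrt_self E hE.posSemidef.nonneg⟩
  have hSu : IsUnit S := by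
    apply (Matrix.isUnit_iff_isUnit_det _).mpr
    have : S.det * S.det = E.det := by rw [← det_mul, hSS]
    exact isUnit_of_mul_isUnit_left (this ▸ hEdetU)
  -- lower bound for every element of the set
  have hlb : ∀ x ∈ {x : ℝ | ∃ W : Matrix (Fin d) (Fin d) ℂ, W.PosDef ∧
      x = (W * E).trace.re - Real.log W.det.re}, d + Real.log E.det.re ≤ x := by
    rintro x ⟨W, hW, rfl⟩
    obtain ⟨hWre, hWim⟩ := pos_re_im hW.det_pos
    have hM : (S * W * S).PosDef := posDef_conj_aux hSherm hSu hW
    have htr : (S * W * S).trace = (W * E).trace := by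
      rw [trace_mul_cycle, trace_mul_comm (S * S) W, hSS]
    have hdet : (S * W * S).det.re = W.det.re * E.det.re := by
      have h1 : (S * W * S).det = W.det * E.det := by
        rw [det_mul, det_mul, ← hSS, det_mul]
        ring
      rw [h1, Complex.mul_re, hWim, hEim]
      ring
    have key := trace_sub_log_det_ge hM
    rw [htr, hdet, Real.log_mul hWre.ne' hEre.ne'] at key
    linarith
  -- the infimum is attained at W = E⁻¹
  have hmem : d + Real.log E.det.re ∈ {x : ℝ | ∃ W : Matrix (Fin d) (Fin d) ℂ, W.PosDef ∧
      x = (W * E).trace.re - Real.log W.det.re} := by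
    refine ⟨E⁻¹, hE.inv, ?_⟩
    have h1 : E⁻¹ * E = 1 := Matrix.nonsing_inv_mul E hEdetU
    have h2 : (E⁻¹ * E).trace.re = (d : ℝ) := by
      rw [h1, trace_one]
      simp
    have h3 : E⁻¹.det = (E.det)⁻¹ := by
      rw [det_nonsing_inv, Ring.inverse_eq_inv]
    have h4 : (E.det)⁻¹.re = (E.det.re)⁻¹ := by
      have : E.det = ((E.det.re : ℝ) : ℂ) := by
        apply Complex.ext <;> simp [hEim]
      rw [this, ← Complex.ofReal_inv, Complex.ofReal_re, Complex.ofReal_re]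
    rw [h2, h3, h4, Real.log_inv]
    ring
  refine le_antisymm (csInf_le ⟨d + Real.log E.det.re, hlb⟩ hmem) (le_csInf ⟨_, hmem⟩ hlb)
end
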